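/- Let k be a field of characteristic 0, let g ∈ k[t,t⁻¹] be nonzero, and let a ∈ k[t,t⁻¹]. If Res₀(g²·(a·b' − a'·b)) = 0 for all b ∈ k[t,t⁻¹], then g·a is a constant in k. -/

import Mathlib

/-- Formal derivative on Laurent polynomials, sending `tⁿ` to `n·tⁿ⁻¹`. -/
noncomputable def lderiv {k : Type*} [CommRing k] (f : LaurentPolynomial k) : LaurentPolynomial k :=
  AddMonoidAlgebra.ofCoeff (Finsupp.sum f.coeff fun n a => Finsupp.single (n - 1) ((n : k) * a))

/-- `Res₀(f)`: the coefficient of `t⁻¹` in a Laurent polynomial. -/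
noncomputable def lres {k : Type*} [CommRing k] (f : LaurentPolynomial k) : k := f.coeff (-1)

section lemmas
variable {k : Type*} [CommRing k]

lemma sing_eq (n : ℤ) (b : k) :
    (AddMonoidAlgebra.ofCoeff (Finsupp.single n b) : LaurentPolynomial k) = AddMonoidAlgebra.single n b := rfl

lemma lderiv_single (n : ℤ) (a : k) :
    lderiv (AddMonoidAlgebra.single n a : LaurentPolynomial k)
      = AddMonoidAlgebra.single (n - 1) ((n : k) * a) := by
  rw [← sing_eq, ← sing_eq]
  unfold lderiv
  rw [AddMonoidAlgebra.coeff_ofCoeff, Finsupp.sum_single_index]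
  simp

lemma lderiv_add (f g : LaurentPolynomial k) :
    lderiv (f + g) = lderiv f + lderiv g := by
  unfold lderiv
  rw [AddMonoidAlgebra.coeff_add, ← AddMonoidAlgebra.ofCoeff_add]
  exact congrArg _ <| Finsupp.sum_add_index' (by simp) (by intro a b₁ b₂; rw [mul_add, Finsupp.single_add])

lemma lderiv_single_mul (m : ℤ) (a : k) (f : LaurentPolynomial k) :
    lderiv ((AddMonoidAlgebra.single m a : LaurentPolynomial k) * f)
      = lderiv (AddMonoidAlgebra.single m a) * f
        + (AddMonoidAlgebra.single m a : LaurentPolynomial k) * lderiv f := by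
  induction f using AddMonoidAlgebra.induction with
  | zero => simp [lderiv, Finsupp.sum_zero_index]
  | single_add n b f hn hb ih =>
      rw [mul_add, lderiv_add, ih, lderiv_add, mul_add, mul_add]
      have h1 : lderiv ((AddMonoidAlgebra.single m a : LaurentPolynomial k)
            * AddMonoidAlgebra.single n b)
          = lderiv (AddMonoidAlgebra.single m a : LaurentPolynomial k)
              * AddMonoidAlgebra.single n b
            + (AddMonoidAlgebra.single m a : LaurentPolynomial k)
              * lderiv (AddMonoidAlgebra.single n b : LaurentPolynomial k) := by
        rw [AddMonoidAlgebra.single_mul_single, lderiv_single, lderiv_single, lderiv_single,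
          AddMonoidAlgebra.single_mul_single, AddMonoidAlgebra.single_mul_single,
          show m - 1 + n = m + n - 1 by ring, show m + (n - 1) = m + n - 1 by ring,
          ← AddMonoidAlgebra.single_add]
        push_cast
        ring_nf
      rw [h1]
      abel

lemma lderiv_mul (f g : LaurentPolynomial k) :
    lderiv (f * g) = lderiv f * g + f * lderiv g := by
  induction f using AddMonoidAlgebra.induction with
  | zero => simp [lderiv, Finsupp.sum_zero_index]
  | single_add n b f hn hb ih =>
      rw [add_mul, lderiv_add, ih, lderiv_add, lderiv_single_mul, add_mul, add_mul]
      abel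

lemma lderiv_apply (f : LaurentPolynomial k) (m : ℤ) :
    (lderiv f).coeff m = ((m + 1 : ℤ) : k) * f.coeff (m + 1) := by
  classical
  unfold lderiv
  rw [AddMonoidAlgebra.coeff_ofCoeff, Finsupp.sum_apply, Finsupp.sum, Finset.sum_eq_single (m + 1)]
  · rw [show m + 1 - 1 = m by ring, Finsupp.single_eq_same]
  · intro n _ hne
    rw [Finsupp.single_apply, if_neg (by omega)]
  · intro hns
    rw [Finsupp.notMem_support_iff.mp hns]
    simp

lemma lres_lderiv (f : LaurentPolynomial k) : lres (lderiv f) = 0 := by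
  unfold lres
  rw [lderiv_apply]
  norm_num

lemma lres_mul_T (f : LaurentPolynomial k) (n : ℤ) :
    lres (f * LaurentPolynomial.T n) = f.coeff (-1 - n) := by
  unfold lres
  rw [LaurentPolynomial.T, AddMonoidAlgebra.coeff_mul_single_apply, mul_one, sub_eq_add_neg]
end lemmas

/-- If `g ∈ k[t,t⁻¹]` is nonzero and `Res₀(g²(ab' − a'b)) = 0` for all `b ∈ k[t,t⁻¹]`,
then `g·a` is a constant in `k`. -/
theorem lres_gsq_form_eq_zero_imp_const {k : Type*} [Field k] [CharZero k]
    (g a : LaurentPolynomial k) (hg : g ≠ 0)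
    (h : ∀ b : LaurentPolynomial k, lres (g ^ 2 * (a * lderiv b - lderiv a * b)) = 0) :
    ∃ c : k, g * a = LaurentPolynomial.C c := by

  classical
  set p : LaurentPolynomial k := lderiv (g * a) * g with hp
  have key : ∀ b : LaurentPolynomial k, lres (p * b) = 0 := by
    intro b
    have e : p * b + p * b
        = lderiv (g ^ 2 * a * b) - g ^ 2 * (a * lderiv b - lderiv a * b) := by
      rw [hp, show g ^ 2 * a * b = (g * a) * (g * b) by ring, lderiv_mul (g * a) (g * b),
        lderiv_mul g a, lderiv_mul g b]
      ring
    have h2 : lres (p * b) + lres (p * b) = 0 := by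
      have hadd : lres (p * b + p * b) = lres (p * b) + lres (p * b) := Finsupp.add_apply (g₁ := (p * b).coeff) _ _
      rw [← hadd, e]
      have hsub : lres (lderiv (g ^ 2 * a * b) - g ^ 2 * (a * lderiv b - lderiv a * b))
          = lres (lderiv (g ^ 2 * a * b)) - lres (g ^ 2 * (a * lderiv b - lderiv a * b)) :=
        by unfold lres; rw [AddMonoidAlgebra.coeff_sub, Finsupp.sub_apply]
      rw [hsub, lres_lderiv, h b, sub_zero]
    exact add_self_eq_zero.mp h2
  have hp0 : p = 0 := by
    ext m
    have := key (LaurentPolynomial.T (-1 - m))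
    rw [lres_mul_T] at this
    simpa using this
  have hd : lderiv (g * a) = 0 := by
    rcases mul_eq_zero.mp hp0 with h' | h'
    · exact h'
    · exact absurd h' hg
  refine ⟨(g * a).coeff 0, ?_⟩
  have hzero : ∀ n : ℤ, n ≠ 0 → (g * a).coeff n = 0 := by
    intro n hn
    have h1 : (lderiv (g * a)).coeff (n - 1) = 0 := by rw [hd]; rfl
    rw [lderiv_apply] at h1
    simp only [sub_add_cancel] at h1
    rcases mul_eq_zero.mp h1 with h' | h'
    · exact absurd (by exact_mod_cast h') hn
    · exact h'
  have hC : LaurentPolynomial.C ((g * a).coeff 0) = AddMonoidAlgebra.single 0 ((g * a).coeff 0) := rfl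
  rw [hC]
  ext n
  rw [AddMonoidAlgebra.coeff_single, Finsupp.single_apply]
  by_cases hn : n = 0
  · subst hn; simp
  · rw [if_neg (fun hh => hn hh.symm), hzero n hn]
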